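/- For c ∈ ℂ, let p_c : ℂ → ℂ be the quadratic polynomial p_c(z) = z² + c, and let p_c^[n] denote its n-th iterate. Let g ∈ ℝ with g > 0 and suppose that ‖p_c^[n](c)‖ → ∞ as n → ∞ and that 2^{−n} · Real.log ‖p_c^[n](c)‖ → g as n → ∞. Then ‖(deriv (p_c^[n]))(c)‖ → ∞ as n → ∞, and for every λ ∈ ℂ, 2^{−n} · Real.log ‖(deriv (p_c^[n]))(c) − λ‖ → g as n → ∞. -/

import Mathlib

open Filter Finset Asymptotics

theorem stmt_15 (c : ℂ) (p : ℂ → ℂ) (hp : ∀ z : ℂ, p z = z ^ 2 + c) (g : ℝ) (hg : 0 < g)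
    (hesc : Tendsto (fun n : ℕ => ‖p^[n] c‖) atTop atTop)
    (hgreen : Tendsto (fun n : ℕ => ((2 : ℝ) ^ n)⁻¹ * Real.log ‖p^[n] c‖) atTop (nhds g)) :
    Tendsto (fun n : ℕ => ‖deriv (p^[n]) c‖) atTop atTop ∧
      ∀ lam : ℂ,
        Tendsto (fun n : ℕ => ((2 : ℝ) ^ n)⁻¹ * Real.log ‖deriv (p^[n]) c - lam‖)
          atTop (nhds g) := by
  have hpe : p = fun z => z ^ 2 + c := funext hp
  have hpd : Differentiable ℂ p := by
    rw [hpe]; exact (differentiable_pow 2).add_const c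
  have hd : ∀ n : ℕ, Differentiable ℂ (p^[n]) := fun n => hpd.iterate n
  have hderiv : ∀ x : ℂ, deriv p x = 2 * x := by
    intro x
    rw [hpe]
    simp [deriv_pow]
  -- derivative of iterates formula
  have key : ∀ n : ℕ, deriv (p^[n]) c = 2 ^ n * ∏ k ∈ range n, p^[k] c := by
    intro n
    induction n with
    | zero => simp
    | succ n ih =>
      rw [Function.iterate_succ' p n]
      rw [deriv_comp _ (hpd _) ((hd n) c)]
      rw [hderiv, ih, Finset.prod_range_succ, pow_succ]
      ring
  -- orbit points are nonzero
  have hzne : ∀ k : ℕ, p^[k] c ≠ 0 := by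
    intro k hk
    have hz0 : ∀ m : ℕ, p^[m] c = 0 → p^[2 * m + 1] c = 0 := by
      intro m hm
      have h1 : p^[2 * m + 1] c = p^[m + 1] (p^[m] c) := by
        rw [← Function.iterate_add_apply]
        congr 1
        omega
      rw [h1, hm, Function.iterate_succ_apply]
      have : p 0 = c := by rw [hp]; ring
      rw [this, hm]
    have hall : ∀ n : ℕ, ∃ m : ℕ, n ≤ m ∧ p^[m] c = 0 := by
      intro n
      induction n with
      | zero => exact ⟨k, Nat.zero_le _, hk⟩
      | succ n ih =>
        obtain ⟨m, hm, hm0⟩ := ih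
        exact ⟨2 * m + 1, by omega, hz0 m hm0⟩
    obtain ⟨N, hN⟩ := eventually_atTop.mp (tendsto_atTop.mp hesc 1)
    obtain ⟨m, hm, hm0⟩ := hall N
    have := hN m hm
    rw [hm0] at this
    simp at this
    linarith
  have hDne : ∀ n : ℕ, deriv (p^[n]) c ≠ 0 := by
    intro n
    rw [key n]
    exact mul_ne_zero (pow_ne_zero _ two_ne_zero)
      (Finset.prod_ne_zero_iff.mpr fun k _ => hzne k)
  have hDpos : ∀ n : ℕ, (0 : ℝ) < ‖deriv (p^[n]) c‖ := fun n =>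
    norm_pos_iff.mpr (hDne n)
  -- log formula
  have hL : ∀ n : ℕ, Real.log ‖deriv (p^[n]) c‖
      = n * Real.log 2 + ∑ k ∈ range n, Real.log ‖p^[k] c‖ := by
    intro n
    rw [key n, norm_mul, norm_pow, norm_prod]
    rw [Real.log_mul (pow_ne_zero n (by norm_num : ‖(2:ℂ)‖ ≠ 0)) (by
      refine (Finset.prod_pos fun k _ => ?_).ne'
      exact norm_pos_iff.mpr (hzne k))]
    rw [Real.log_pow, Real.log_prod fun k _ => (norm_pos_iff.mpr (hzne k)).ne']
    norm_num
  have h2pos : ∀ n : ℕ, (0 : ℝ) < 2 ^ n := fun n => by positivity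
  have hgeom : ∀ n : ℕ, ∑ k ∈ range n, (2 : ℝ) ^ k = 2 ^ n - 1 := by
    intro n
    rw [geom_sum_eq (by norm_num)]
    norm_num
  -- main convergence for log of derivative
  have hmain : Tendsto (fun n : ℕ => ((2 : ℝ) ^ n)⁻¹ * Real.log ‖deriv (p^[n]) c‖)
      atTop (nhds g) := by
    have e_oh : (fun n : ℕ => Real.log ‖p^[n] c‖ - 2 ^ n * g)
        =o[atTop] fun n : ℕ => (2 : ℝ) ^ n := by
      have h0 : Tendsto (fun n : ℕ => ((2 : ℝ) ^ n)⁻¹ * Real.log ‖p^[n] c‖ - g)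
          atTop (nhds 0) := tendsto_sub_nhds_zero_iff.mpr hgreen
      have h1 := (isBigO_refl (fun n : ℕ => (2 : ℝ) ^ n) atTop).mul_isLittleO
        ((isLittleO_one_iff ℝ).mpr h0)
      refine h1.congr' (Eventually.of_forall fun n => ?_)
        (Eventually.of_forall fun n => mul_one _)
      field_simp
    have hsumtop : Tendsto (fun n : ℕ => ∑ k ∈ range n, (2 : ℝ) ^ k) atTop atTop := by
      have := tendsto_atTop_add_const_right atTop (-1 : ℝ)
        (tendsto_pow_atTop_atTop_of_one_lt (one_lt_two (α := ℝ)))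
      refine this.congr fun n => ?_
      rw [hgeom n]; ring
    have hsum : (fun n : ℕ => ∑ k ∈ range n, (Real.log ‖p^[k] c‖ - 2 ^ k * g))
        =o[atTop] fun n : ℕ => (2 : ℝ) ^ n := by
      have h2 := e_oh.sum_range (fun k => (h2pos k).le) hsumtop
      refine h2.trans_isBigO (IsBigO.of_bound 1 (Eventually.of_forall fun n => ?_))
      rw [hgeom n]
      simp only [Real.norm_eq_abs, one_mul]
      rw [abs_of_nonneg (by linarith [one_le_pow₀ (one_le_two (α := ℝ)) (n := n)]),
        abs_of_nonneg (h2pos n).le]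
      linarith
    have hnlog : (fun n : ℕ => (n : ℝ) * Real.log 2) =o[atTop] fun n : ℕ => (2 : ℝ) ^ n := by
      have := (isLittleO_coe_const_pow_of_one_lt (R := ℝ) (one_lt_two (α := ℝ))).const_smul_left
        (Real.log 2)
      refine this.congr_left fun n => ?_
      simp [mul_comm]
    have hS := hnlog.add hsum
    have h1 : Tendsto (fun n : ℕ => ((n : ℝ) * Real.log 2
        + ∑ k ∈ range n, (Real.log ‖p^[k] c‖ - 2 ^ k * g)) / 2 ^ n) atTop (nhds 0) :=
      hS.tendsto_div_nhds_zero
    have hinv0 : Tendsto (fun n : ℕ => ((2 : ℝ) ^ n)⁻¹) atTop (nhds 0) :=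
      tendsto_inv_atTop_zero.comp (tendsto_pow_atTop_atTop_of_one_lt (one_lt_two (α := ℝ)))
    have h2 : Tendsto (fun n : ℕ => g * (1 - ((2 : ℝ) ^ n)⁻¹)) atTop (nhds g) := by
      have := (tendsto_const_nhds (x := (1 : ℝ)) (f := atTop (α := ℕ))).sub hinv0
      rw [sub_zero] at this
      have h3 := this.const_mul g
      rw [mul_one] at h3
      exact h3
    have h4 := h1.add h2
    rw [zero_add] at h4
    refine h4.congr fun n => ?_
    rw [hL n, Finset.sum_sub_distrib, ← Finset.sum_mul, hgeom n]
    have := (h2pos n).ne'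
    field_simp
    ring
  constructor
  · -- norm of derivative tends to infinity
    have hev : ∀ᶠ n : ℕ in atTop, g / 2 * 2 ^ n ≤ Real.log ‖deriv (p^[n]) c‖ := by
      filter_upwards [hmain.eventually (eventually_ge_nhds (by linarith : g / 2 < g))] with n hn
      rw [inv_mul_eq_div, le_div_iff₀ (h2pos n)] at hn
      linarith
    have hbase : Tendsto (fun n : ℕ => g / 2 * 2 ^ n) atTop atTop :=
      (tendsto_pow_atTop_atTop_of_one_lt (one_lt_two (α := ℝ))).const_mul_atTop (by linarith)
    have hLtop : Tendsto (fun n : ℕ => Real.log ‖deriv (p^[n]) c‖) atTop atTop :=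
      tendsto_atTop_mono' atTop hev hbase
    exact (Real.tendsto_exp_atTop.comp hLtop).congr fun n => Real.exp_log (hDpos n)
  · intro lam
    have htop : Tendsto (fun n : ℕ => ‖deriv (p^[n]) c‖) atTop atTop := by
      have hev : ∀ᶠ n : ℕ in atTop, g / 2 * 2 ^ n ≤ Real.log ‖deriv (p^[n]) c‖ := by
        filter_upwards [hmain.eventually (eventually_ge_nhds (by linarith : g / 2 < g))] with n hn
        rw [inv_mul_eq_div, le_div_iff₀ (h2pos n)] at hn
        linarith
      have hbase : Tendsto (fun n : ℕ => g / 2 * 2 ^ n) atTop atTop :=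
        (tendsto_pow_atTop_atTop_of_one_lt (one_lt_two (α := ℝ))).const_mul_atTop (by linarith)
      have hLtop : Tendsto (fun n : ℕ => Real.log ‖deriv (p^[n]) c‖) atTop atTop :=
        tendsto_atTop_mono' atTop hev hbase
      exact (Real.tendsto_exp_atTop.comp hLtop).congr fun n => Real.exp_log (hDpos n)
    have hinv0 : Tendsto (fun n : ℕ => ((2 : ℝ) ^ n)⁻¹) atTop (nhds 0) :=
      tendsto_inv_atTop_zero.comp (tendsto_pow_atTop_atTop_of_one_lt (one_lt_two (α := ℝ)))
    have hinvlog : Tendsto (fun n : ℕ => ((2 : ℝ) ^ n)⁻¹ * Real.log 2) atTop (nhds 0) := by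
      have := hinv0.mul_const (Real.log 2)
      rwa [zero_mul] at this
    have hlow : Tendsto (fun n : ℕ =>
        ((2 : ℝ) ^ n)⁻¹ * (Real.log ‖deriv (p^[n]) c‖ - Real.log 2)) atTop (nhds g) := by
      have := hmain.sub hinvlog
      rw [sub_zero] at this
      refine this.congr fun n => ?_
      ring
    have hhigh : Tendsto (fun n : ℕ =>
        ((2 : ℝ) ^ n)⁻¹ * (Real.log ‖deriv (p^[n]) c‖ + Real.log 2)) atTop (nhds g) := by
      have := hmain.add hinvlog
      rw [add_zero] at this
      refine this.congr fun n => ?_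
      ring
    refine tendsto_of_tendsto_of_tendsto_of_le_of_le' hlow hhigh ?_ ?_
    · filter_upwards [htop.eventually_ge_atTop (2 * ‖lam‖ + 2)] with n hn
      have hD := hDpos n
      have h1 : ‖deriv (p^[n]) c‖ / 2 ≤ ‖deriv (p^[n]) c - lam‖ := by
        have := norm_sub_norm_le (deriv (p^[n]) c) lam
        have h0 := norm_nonneg lam
        linarith
      have h2 : Real.log ‖deriv (p^[n]) c‖ - Real.log 2
          ≤ Real.log ‖deriv (p^[n]) c - lam‖ := by
        have h3 : Real.log (‖deriv (p^[n]) c‖ / 2) ≤ Real.log ‖deriv (p^[n]) c - lam‖ :=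
          Real.log_le_log (by linarith) h1
        rwa [Real.log_div hD.ne' two_ne_zero] at h3
      exact mul_le_mul_of_nonneg_left h2 (inv_nonneg.mpr (h2pos n).le)
    · filter_upwards [htop.eventually_ge_atTop (2 * ‖lam‖ + 2)] with n hn
      have hD := hDpos n
      have h0 := norm_nonneg lam
      have h1 : ‖deriv (p^[n]) c - lam‖ ≤ 2 * ‖deriv (p^[n]) c‖ := by
        have := norm_sub_le (deriv (p^[n]) c) lam
        linarith
      have hpos : (0 : ℝ) < ‖deriv (p^[n]) c - lam‖ := by
        have := norm_sub_norm_le (deriv (p^[n]) c) lam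
        linarith
      have h2 : Real.log ‖deriv (p^[n]) c - lam‖
          ≤ Real.log ‖deriv (p^[n]) c‖ + Real.log 2 := by
        have h3 : Real.log ‖deriv (p^[n]) c - lam‖ ≤ Real.log (2 * ‖deriv (p^[n]) c‖) :=
          Real.log_le_log hpos h1
        rw [Real.log_mul two_ne_zero hD.ne'] at h3
        linarith
      exact mul_le_mul_of_nonneg_left h2 (inv_nonneg.mpr (h2pos n).le)
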